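/- arXiv:0901.0696 — 3 statements merged into one kernel-verified Lean document; each statement's English description precedes it below -/
import Mathlib

section
/- The number of phylogenetic trees on n labeled leaves (rooted non-plane binary trees whose leaves are labeled by 1,...,n and whose internal nodes all have exactly two children) equals the double factorial (2n-3)!! = 1·3·5···(2n-3), for all n ≥ 2. -/
open scoped Classical

/-- Plane binary trees: every node has outdegree 0 or 2. -/
inductive BT where
  | leaf : BT
  | node : BT → BT → BT

/-- Isomorphism of rooted binary trees with *unordered* children. -/
inductive Iso : BT → BT → Prop
  | leaf : Iso .leaf .leaf
  | node {a b c d} : Iso a c → Iso b d → Iso (.node a b) (.node c d)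
  | swap {a b c d} : Iso a d → Iso b c → Iso (.node a b) (.node c d)

theorem Iso.rfl : ∀ t, Iso t t
  | .leaf => .leaf
  | .node l r => .node (Iso.rfl l) (Iso.rfl r)

theorem Iso.symm' {a b : BT} (h : Iso a b) : Iso b a := by
  induction h with
  | leaf => exact .leaf
  | node h1 h2 ih1 ih2 => exact .node ih1 ih2
  | swap h1 h2 ih1 ih2 => exact .swap ih2 ih1

theorem Iso.trans' : ∀ {a b c : BT}, Iso a b → Iso b c → Iso a c := by
  intro a b c h1
  induction h1 generalizing c with
  | leaf => exact fun h2 => h2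
  | node g1 g2 ih1 ih2 =>
      intro h2
      cases h2 with
      | node k1 k2 => exact .node (ih1 k1) (ih2 k2)
      | swap k1 k2 => exact .swap (ih1 k1) (ih2 k2)
  | swap g1 g2 ih1 ih2 =>
      intro h2
      cases h2 with
      | node k1 k2 => exact .swap (ih1 k2) (ih2 k1)
      | swap k1 k2 => exact .node (ih1 k2) (ih2 k1)

instance btSetoid : Setoid BT :=
  ⟨Iso, ⟨Iso.rfl, Iso.symm', Iso.trans'⟩⟩

/-- Otter trees: isomorphism classes of unordered rooted binary trees. -/
def Otter : Type := Quotient btSetoid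

/-- Number of leaves. -/
def leavesBT : BT → ℕ
  | .leaf => 1
  | .node l r => leavesBT l + leavesBT r

/-- Number of internal (binary) nodes. -/
def internalsBT : BT → ℕ
  | .leaf => 0
  | .node l r => internalsBT l + internalsBT r + 1

/-- Number of symmetrical nodes: internal nodes whose two subtrees are isomorphic. -/
noncomputable def symBT : BT → ℕ
  | .leaf => 0
  | .node l r => symBT l + symBT r + (if Iso l r then 1 else 0)

theorem leaves_iso {a b : BT} (h : Iso a b) : leavesBT a = leavesBT b := by
  induction h with
  | leaf => rfl
  | node h1 h2 ih1 ih2 => simp [leavesBT, ih1, ih2]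
  | swap h1 h2 ih1 ih2 => simp [leavesBT, ih1, ih2]; omega

theorem internals_iso {a b : BT} (h : Iso a b) : internalsBT a = internalsBT b := by
  induction h with
  | leaf => rfl
  | node h1 h2 ih1 ih2 => simp [internalsBT, ih1, ih2]
  | swap h1 h2 ih1 ih2 => simp [internalsBT, ih1, ih2]; omega

theorem sym_iso {a b : BT} (h : Iso a b) : symBT a = symBT b := by
  induction h with
  | leaf => rfl
  | @node a b c d h1 h2 ih1 ih2 =>
      have hiff : Iso a b ↔ Iso c d :=
        ⟨fun hab => (h1.symm'.trans' hab).trans' h2,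
         fun hcd => (h1.trans' hcd).trans' h2.symm'⟩
      simp only [symBT, ih1, ih2, if_congr hiff rfl rfl]
  | @swap a b c d h1 h2 ih1 ih2 =>
      have hiff : Iso a b ↔ Iso c d :=
        ⟨fun hab => (h2.symm'.trans' hab.symm').trans' h1,
         fun hcd => (h1.trans' hcd.symm').trans' h2.symm'⟩
      simp only [symBT, ih1, ih2, if_congr hiff rfl rfl]
      omega

def Otter.leaves : Otter → ℕ := Quotient.lift leavesBT fun _ _ h => leaves_iso h
def Otter.internals : Otter → ℕ := Quotient.lift internalsBT fun _ _ h => internals_iso h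
noncomputable def Otter.sym : Otter → ℕ := Quotient.lift symBT fun _ _ h => sym_iso h

/-- The set (as a type) of Otter trees with `n` leaves. -/
def OtterN (n : ℕ) : Type := {q : Otter // q.leaves = n}

/-- Wedderburn–Etherington numbers: number of Otter trees with `n` leaves. -/
noncomputable def WE (n : ℕ) : ℕ := Nat.card (OtterN n)

/-- Binary trees with labeled leaves. -/
inductive LBT where
  | leaf : ℕ → LBT
  | node : LBT → LBT → LBT

/-- Label-preserving isomorphism with unordered children. -/
inductive LIso : LBT → LBT → Prop
  | leaf (k : ℕ) : LIso (.leaf k) (.leaf k)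
  | node {a b c d} : LIso a c → LIso b d → LIso (.node a b) (.node c d)
  | swap {a b c d} : LIso a d → LIso b c → LIso (.node a b) (.node c d)

theorem LIso.rfl : ∀ t, LIso t t
  | .leaf k => .leaf k
  | .node l r => .node (LIso.rfl l) (LIso.rfl r)

theorem LIso.symm' {a b : LBT} (h : LIso a b) : LIso b a := by
  induction h with
  | leaf k => exact .leaf k
  | node h1 h2 ih1 ih2 => exact .node ih1 ih2
  | swap h1 h2 ih1 ih2 => exact .swap ih2 ih1

theorem LIso.trans' : ∀ {a b c : LBT}, LIso a b → LIso b c → LIso a c := by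
  intro a b c h1
  induction h1 generalizing c with
  | leaf k => exact fun h2 => h2
  | node g1 g2 ih1 ih2 =>
      intro h2
      cases h2 with
      | node k1 k2 => exact .node (ih1 k1) (ih2 k2)
      | swap k1 k2 => exact .swap (ih1 k1) (ih2 k2)
  | swap g1 g2 ih1 ih2 =>
      intro h2
      cases h2 with
      | node k1 k2 => exact .swap (ih1 k2) (ih2 k1)
      | swap k1 k2 => exact .node (ih1 k2) (ih2 k1)

instance ltSetoid : Setoid LBT :=
  ⟨LIso, ⟨LIso.rfl, LIso.symm', LIso.trans'⟩⟩

/-- Labeled (phylogenetic-type) trees up to label-preserving isomorphism. -/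
def LTree : Type := Quotient ltSetoid

/-- The multiset of leaf labels. -/
def labelsLT : LBT → Multiset ℕ
  | .leaf k => {k}
  | .node l r => labelsLT l + labelsLT r

/-- The underlying unlabeled shape of a labeled tree. -/
def shapeLT : LBT → BT
  | .leaf _ => .leaf
  | .node l r => .node (shapeLT l) (shapeLT r)

theorem labels_iso {a b : LBT} (h : LIso a b) : labelsLT a = labelsLT b := by
  induction h with
  | leaf k => rfl
  | node h1 h2 ih1 ih2 => simp [labelsLT, ih1, ih2]
  | swap h1 h2 ih1 ih2 => simp [labelsLT, ih1, ih2]; exact add_comm _ _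

theorem shape_iso {a b : LBT} (h : LIso a b) : Iso (shapeLT a) (shapeLT b) := by
  induction h with
  | leaf k => exact .leaf
  | node h1 h2 ih1 ih2 => exact .node ih1 ih2
  | swap h1 h2 ih1 ih2 => exact .swap ih1 ih2

def LTree.labels : LTree → Multiset ℕ := Quotient.lift labelsLT fun _ _ h => labels_iso h

def LTree.shape : LTree → Otter :=
  Quotient.lift (fun t => (⟦shapeLT t⟧ : Otter)) fun _ _ h => Quotient.sound (shape_iso h)

/-- Phylogenetic trees of size `n`: labeled trees whose leaf labels are exactly `1, …, n`. -/
def Phylo (n : ℕ) : Type := {q : LTree // q.labels = (Finset.Icc 1 n).val}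

/-- The number of phylogenetic trees of size `n`. -/
noncomputable def phyloCount (n : ℕ) : ℕ := Nat.card (Phylo n)

/-- The double factorial `n!! = n·(n-2)·(n-4)···`. -/
def doubleFac : ℕ → ℕ
  | 0 => 1
  | 1 => 1
  | (n+2) => (n+2) * doubleFac n

/-- The probability that two independent uniformly random phylogenetic trees of
size `n` are isomorphic (have the same shape). -/
noncomputable def pIso (n : ℕ) : ℚ :=
  (Nat.card {pp : Phylo n × Phylo n // pp.1.1.shape = pp.2.1.shape} : ℚ)
    / (Nat.card (Phylo n) : ℚ) ^ 2

section Aux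

deriving instance DecidableEq for LBT

/-- Minimum leaf label. -/
def minL : LBT → ℕ
  | .leaf k => k
  | .node l r => min (minL l) (minL r)

/-- Canonical form predicate: children ordered by minimum label. -/
def canonP : LBT → Prop
  | .leaf _ => True
  | .node l r => canonP l ∧ canonP r ∧ minL l < minL r

theorem labels_ne_zero : ∀ t : LBT, labelsLT t ≠ 0
  | .leaf k => by simp [labelsLT]
  | .node l r => by
      intro h
      have h' : labelsLT l + labelsLT r = 0 := h
      exact labels_ne_zero l (Multiset.le_zero.1 (h' ▸ Multiset.le_add_right _ _))

theorem minL_mem : ∀ t : LBT, minL t ∈ labelsLT t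
  | .leaf k => by simp [minL, labelsLT]
  | .node l r => by
      simp only [minL, labelsLT, Multiset.mem_add]
      rcases le_total (minL l) (minL r) with h | h
      · left; rw [min_eq_left h]; exact minL_mem l
      · right; rw [min_eq_right h]; exact minL_mem r

theorem minL_le : ∀ (t : LBT) (k : ℕ), k ∈ labelsLT t → minL t ≤ k
  | .leaf j, k => by simp [labelsLT, minL]; rintro rfl; rfl
  | .node l r, k => by
      simp only [labelsLT, Multiset.mem_add, minL]
      rintro (h | h)
      · exact le_trans (min_le_left _ _) (minL_le l k h)
      · exact le_trans (min_le_right _ _) (minL_le r k h)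

theorem minL_congr {a b : LBT} (h : labelsLT a = labelsLT b) : minL a = minL b :=
  le_antisymm (minL_le a _ (h ▸ minL_mem b)) (minL_le b _ (h ▸ minL_mem a))

/-- Canonicalization. -/
def nrm : LBT → LBT
  | .leaf k => .leaf k
  | .node l r =>
      if minL (nrm l) < minL (nrm r) then .node (nrm l) (nrm r)
      else .node (nrm r) (nrm l)

theorem nrm_node (l r : LBT) : nrm (.node l r) =
    if minL (nrm l) < minL (nrm r) then .node (nrm l) (nrm r)
    else .node (nrm r) (nrm l) := rfl

theorem labels_nrm : ∀ t : LBT, labelsLT (nrm t) = labelsLT t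
  | .leaf k => rfl
  | .node l r => by
      rw [nrm_node]
      split <;> simp [labelsLT, labels_nrm l, labels_nrm r, add_comm]

theorem iso_nrm : ∀ t : LBT, LIso t (nrm t)
  | .leaf k => .leaf k
  | .node l r => by
      rw [nrm_node]; split
      · exact .node (iso_nrm l) (iso_nrm r)
      · exact .swap (iso_nrm l) (iso_nrm r)

theorem canon_nrm : ∀ t : LBT, (labelsLT t).Nodup → canonP (nrm t)
  | .leaf k => fun _ => trivial
  | .node l r => by
      intro hnd
      rw [labelsLT, Multiset.nodup_add] at hnd
      obtain ⟨hl, hr, hdisj⟩ := hnd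
      have hne : minL (nrm l) ≠ minL (nrm r) := by
        rw [minL_congr (labels_nrm l), minL_congr (labels_nrm r)]
        intro h
        exact Multiset.disjoint_left.1 hdisj (minL_mem l) (h ▸ minL_mem r)
      rw [nrm_node]; split
      · exact ⟨canon_nrm l hl, canon_nrm r hr, by assumption⟩
      · exact ⟨canon_nrm r hr, canon_nrm l hl, lt_of_le_of_ne (not_lt.1 (by assumption)) (Ne.symm hne)⟩

theorem canon_unique {a b : LBT} (h : LIso a b) : canonP a → canonP b → a = b := by
  induction h with
  | leaf k => intro _ _; rfl
  | node h1 h2 ih1 ih2 =>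
      rintro ⟨c1, c2, -⟩ ⟨d1, d2, -⟩
      rw [ih1 c1 d1, ih2 c2 d2]
  | @swap a b c d h1 h2 ih1 ih2 =>
      rintro ⟨c1, c2, hlt1⟩ ⟨d1, d2, hlt2⟩
      exfalso
      have e1 : minL a = minL d := minL_congr (labels_iso h1)
      have e2 : minL b = minL c := minL_congr (labels_iso h2)
      omega

theorem labels_singleton : ∀ {t : LBT} {k : ℕ}, labelsLT t = {k} → t = .leaf k := by
  intro t k h
  cases t with
  | leaf j =>
      rw [labelsLT, Multiset.singleton_inj] at h
      exact congrArg LBT.leaf h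
  | node l r =>
      exfalso
      have : Multiset.card (labelsLT l + labelsLT r) = 1 := by rw [← labelsLT]; rw [h]; rfl
      rw [Multiset.card_add] at this
      have h1 : labelsLT l ≠ 0 := labels_ne_zero l
      have h2 : labelsLT r ≠ 0 := labels_ne_zero r
      have h1' : 0 < Multiset.card (labelsLT l) := Multiset.card_pos.2 h1
      have h2' : 0 < Multiset.card (labelsLT r) := Multiset.card_pos.2 h2
      omega

/-- List of all subtrees. -/
def subT : LBT → List LBT
  | .leaf k => [.leaf k]
  | .node l r => .node l r :: (subT l ++ subT r)

theorem mem_subT_self : ∀ t : LBT, t ∈ subT t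
  | .leaf k => by simp [subT]
  | .node l r => by simp [subT]

theorem labels_le_subT : ∀ {t u : LBT}, u ∈ subT t → labelsLT u ≤ labelsLT t := by
  intro t
  induction t with
  | leaf k => intro u hu; simp only [subT, List.mem_singleton] at hu; rw [hu]
  | node l r ihl ihr =>
      intro u hu
      simp only [subT, List.mem_cons, List.mem_append] at hu
      rcases hu with rfl | hu | hu
      · exact le_refl _
      · exact le_trans (ihl hu) (by simp [labelsLT])
      · exact le_trans (ihr hu) (by simp [labelsLT])

theorem length_subT : ∀ t : LBT, (subT t).length + 1 = 2 * Multiset.card (labelsLT t)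
  | .leaf k => by simp [subT, labelsLT]
  | .node l r => by
      have hl := length_subT l
      have hr := length_subT r
      simp only [subT, List.length_cons, List.length_append, labelsLT, Multiset.card_add]
      omega

theorem card_labels_pos (t : LBT) : 0 < Multiset.card (labelsLT t) :=
  Multiset.card_pos.2 (labels_ne_zero t)

theorem nodup_subT : ∀ t : LBT, (labelsLT t).Nodup → (subT t).Nodup := by
  intro t
  induction t with
  | leaf k => intro _; simp [subT]
  | node l r ihl ihr =>
      intro hnd
      rw [labelsLT, Multiset.nodup_add] at hnd
      obtain ⟨hl, hr, hdisj⟩ := hnd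
      have hdisj' : ∀ u, u ∈ subT l → u ∉ subT r := by
        intro u hul hur
        obtain ⟨k, hk⟩ := Multiset.card_pos_iff_exists_mem.1 (card_labels_pos u)
        exact Multiset.disjoint_left.1 hdisj
          (Multiset.mem_of_le (labels_le_subT hul) hk)
          (Multiset.mem_of_le (labels_le_subT hur) hk)
      have hsize : ∀ u ∈ subT l ++ subT r, LBT.node l r ≠ u := by
        intro u hu heq
        have hle : labelsLT u ≤ labelsLT l ∨ labelsLT u ≤ labelsLT r := by
          rcases List.mem_append.1 hu with h | h
          · exact Or.inl (labels_le_subT h)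
          · exact Or.inr (labels_le_subT h)
        have hcard : Multiset.card (labelsLT u) = Multiset.card (labelsLT l) + Multiset.card (labelsLT r) := by
          rw [← heq]; simp [labelsLT]
        have c1 := card_labels_pos l
        have c2 := card_labels_pos r
        rcases hle with h | h <;> have := Multiset.card_le_card h <;> omega
      rw [subT, List.nodup_cons, List.nodup_append]
      refine ⟨fun hmem => hsize _ hmem rfl, ihl hl, ihr hr, ?_⟩
      intro u hul v hur huv
      subst huv
      exact hdisj' u hul hur

/-- Insert a new leaf `m` as sibling of the (unique) occurrence of subtree `u`. -/
def ins (m : ℕ) (u : LBT) : LBT → LBT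
  | .leaf k => if LBT.leaf k = u then .node u (.leaf m) else .leaf k
  | .node l r => if LBT.node l r = u then .node u (.leaf m)
                 else .node (ins m u l) (ins m u r)

theorem ins_leaf (m k : ℕ) (u : LBT) : ins m u (.leaf k) =
    if LBT.leaf k = u then .node u (.leaf m) else .leaf k := rfl

theorem ins_node (m : ℕ) (u l r : LBT) : ins m u (.node l r) =
    if LBT.node l r = u then .node u (.leaf m) else .node (ins m u l) (ins m u r) := rfl

theorem ins_self (m : ℕ) (t : LBT) : ins m t t = .node t (.leaf m) := by
  cases t <;> simp [ins]

theorem ins_not_mem {m : ℕ} {u : LBT} : ∀ {t : LBT}, u ∉ subT t → ins m u t = t := by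
  intro t
  induction t with
  | leaf k => intro h; simp only [subT, List.mem_singleton] at h
              rw [ins_leaf, if_neg (fun hh => h hh.symm)]
  | node l r ihl ihr =>
      intro h
      simp only [subT, List.mem_cons, List.mem_append] at h
      push_neg at h
      rw [ins_node, if_neg (fun hh => h.1 hh.symm), ihl h.2.1, ihr h.2.2]

theorem mem_one_side {l r u : LBT} (hnd : (labelsLT (LBT.node l r)).Nodup)
    (h : u ∈ subT l) : u ∉ subT r := by
  rw [labelsLT, Multiset.nodup_add] at hnd
  intro hur
  obtain ⟨k, hk⟩ := Multiset.card_pos_iff_exists_mem.1 (card_labels_pos u)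
  exact Multiset.disjoint_left.1 hnd.2.2
    (Multiset.mem_of_le (labels_le_subT h) hk)
    (Multiset.mem_of_le (labels_le_subT hur) hk)

theorem labels_ins {m : ℕ} {u : LBT} : ∀ {t : LBT}, u ∈ subT t → (labelsLT t).Nodup →
    labelsLT (ins m u t) = labelsLT t + {m} := by
  intro t
  induction t with
  | leaf k =>
      intro hu _
      simp only [subT, List.mem_singleton] at hu
      rw [← hu, ins_self]; rfl
  | node l r ihl ihr =>
      intro hu hnd
      by_cases heq : LBT.node l r = u
      · rw [← heq, ins_self]; rfl
      · simp only [subT, List.mem_cons, List.mem_append] at hu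
        rcases hu with h | hu | hu
        · exact absurd h.symm heq
        · have hnr : u ∉ subT r := mem_one_side hnd hu
          have hndl : (labelsLT l).Nodup := by
            rw [labelsLT, Multiset.nodup_add] at hnd; exact hnd.1
          rw [ins_node, if_neg heq, ins_not_mem hnr]
          show labelsLT (ins m u l) + labelsLT r = (labelsLT l + labelsLT r) + {m}
          rw [ihl hu hndl, add_right_comm]
        · have hnl : u ∉ subT l := by
            intro hul; exact mem_one_side hnd hul hu
          have hndr : (labelsLT r).Nodup := by
            rw [labelsLT, Multiset.nodup_add] at hnd; exact hnd.2.1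
          rw [ins_node, if_neg heq, ins_not_mem hnl]
          show labelsLT l + labelsLT (ins m u r) = (labelsLT l + labelsLT r) + {m}
          rw [ihr hu hndr, add_assoc]

theorem minL_of_labels_add {a b : LBT} {m : ℕ} (h : labelsLT a = labelsLT b + {m})
    (hm : ∀ k ∈ labelsLT b, k < m) : minL a = minL b := by
  have h1 : minL a ≤ minL b := minL_le a _ (by rw [h]; exact Multiset.mem_add.2 (Or.inl (minL_mem b)))
  have h2 : minL b < m := hm _ (minL_mem b)
  have h3 : minL a ∈ labelsLT b + {m} := h ▸ minL_mem a
  rcases Multiset.mem_add.1 h3 with h4 | h4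
  · exact le_antisymm h1 (minL_le b _ h4)
  · rw [Multiset.mem_singleton] at h4; omega

theorem minL_lt_of_labels {t : LBT} {m : ℕ} (hm : ∀ k ∈ labelsLT t, k < m) : minL t < m :=
  hm _ (minL_mem t)

theorem canon_ins {m : ℕ} {u : LBT} : ∀ {t : LBT}, u ∈ subT t → (labelsLT t).Nodup →
    (∀ k ∈ labelsLT t, k < m) → canonP t → canonP (ins m u t) := by
  intro t
  induction t with
  | leaf k =>
      intro hu _ hm _
      simp only [subT, List.mem_singleton] at hu
      subst hu
      rw [ins_self]
      exact ⟨trivial, trivial, minL_lt_of_labels hm⟩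
  | node l r ihl ihr =>
      intro hu hnd hm hc
      by_cases heq : LBT.node l r = u
      · subst heq
        rw [ins_self]
        exact ⟨hc, trivial, minL_lt_of_labels hm⟩
      · simp only [subT, List.mem_cons, List.mem_append] at hu
        have hnd' := hnd
        rw [labelsLT, Multiset.nodup_add] at hnd'
        have hml : ∀ k ∈ labelsLT l, k < m := fun k hk => hm k (Multiset.mem_add.2 (Or.inl hk))
        have hmr : ∀ k ∈ labelsLT r, k < m := fun k hk => hm k (Multiset.mem_add.2 (Or.inr hk))
        rcases hu with h | hu | hu
        · exact absurd h.symm heq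
        · have hnr : u ∉ subT r := mem_one_side hnd hu
          rw [ins_node, if_neg heq, ins_not_mem hnr]
          refine ⟨ihl hu hnd'.1 hml hc.1, hc.2.1, ?_⟩
          rw [minL_of_labels_add (labels_ins hu hnd'.1) hml]
          exact hc.2.2
        · have hnl : u ∉ subT l := fun hul => mem_one_side hnd hul hu
          rw [ins_node, if_neg heq, ins_not_mem hnl]
          refine ⟨hc.1, ihr hu hnd'.2.1 hmr hc.2.1, ?_⟩
          rw [minL_of_labels_add (labels_ins hu hnd'.2.1) hmr]
          exact hc.2.2

end Aux
section Aux2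

/-- Delete the leaf labeled `m` (collapsing its parent). -/
def del (m : ℕ) : LBT → LBT
  | .leaf k => .leaf k
  | .node l r => if r = .leaf m then l
                 else if m ∈ labelsLT r then .node l (del m r)
                 else .node (del m l) r

theorem del_node (m : ℕ) (l r : LBT) : del m (.node l r) =
    if r = .leaf m then l else if m ∈ labelsLT r then .node l (del m r)
    else .node (del m l) r := rfl

/-- The sibling of the leaf labeled `m`. -/
def sib (m : ℕ) : LBT → LBT
  | .leaf k => .leaf k
  | .node l r => if r = .leaf m then l
                 else if m ∈ labelsLT r then sib m r
                 else sib m l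

theorem sib_node (m : ℕ) (l r : LBT) : sib m (.node l r) =
    if r = .leaf m then l else if m ∈ labelsLT r then sib m r
    else sib m l := rfl

theorem ins_ne_leaf {m : ℕ} {u t : LBT} (hm : m ∉ labelsLT t) : ins m u t ≠ .leaf m := by
  cases t with
  | leaf k =>
      rw [ins_leaf]
      split
      · exact fun h => LBT.noConfusion h
      · intro h
        apply hm
        rw [LBT.leaf.injEq] at h
        simp [labelsLT, h]
  | node l r =>
      rw [ins_node]
      split <;> exact fun h => LBT.noConfusion h

theorem del_ins {m : ℕ} {u : LBT} : ∀ {t : LBT}, u ∈ subT t → (labelsLT t).Nodup →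
    m ∉ labelsLT t → del m (ins m u t) = t := by
  intro t
  induction t with
  | leaf k =>
      intro hu _ _
      simp only [subT, List.mem_singleton] at hu
      subst hu
      rw [ins_self, del_node, if_pos rfl]
  | node l r ihl ihr =>
      intro hu hnd hm
      have hml : m ∉ labelsLT l := fun h => hm (Multiset.mem_add.2 (Or.inl h))
      have hmr : m ∉ labelsLT r := fun h => hm (Multiset.mem_add.2 (Or.inr h))
      have hnd' := hnd
      rw [labelsLT, Multiset.nodup_add] at hnd'
      by_cases heq : LBT.node l r = u
      · subst heq
        rw [ins_self, del_node, if_pos rfl]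
      · simp only [subT, List.mem_cons, List.mem_append] at hu
        rcases hu with h | hu | hu
        · exact absurd h.symm heq
        · have hnr : u ∉ subT r := mem_one_side hnd hu
          rw [ins_node, if_neg heq, ins_not_mem hnr, del_node]
          rw [if_neg, if_neg hmr, ihl hu hnd'.1 hml]
          intro h; subst h; exact hmr (by simp [labelsLT])
        · have hnl : u ∉ subT l := fun hul => mem_one_side hnd hul hu
          have hmem : m ∈ labelsLT (ins m u r) := by
            rw [labels_ins hu hnd'.2.1]; simp
          rw [ins_node, if_neg heq, ins_not_mem hnl, del_node]
          rw [if_neg (ins_ne_leaf hmr), if_pos hmem, ihr hu hnd'.2.1 hmr]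

theorem sib_ins {m : ℕ} {u : LBT} : ∀ {t : LBT}, u ∈ subT t → (labelsLT t).Nodup →
    m ∉ labelsLT t → sib m (ins m u t) = u := by
  intro t
  induction t with
  | leaf k =>
      intro hu _ _
      simp only [subT, List.mem_singleton] at hu
      subst hu
      rw [ins_self, sib_node, if_pos rfl]
  | node l r ihl ihr =>
      intro hu hnd hm
      have hml : m ∉ labelsLT l := fun h => hm (Multiset.mem_add.2 (Or.inl h))
      have hmr : m ∉ labelsLT r := fun h => hm (Multiset.mem_add.2 (Or.inr h))
      have hnd' := hnd
      rw [labelsLT, Multiset.nodup_add] at hnd'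
      by_cases heq : LBT.node l r = u
      · subst heq
        rw [ins_self, sib_node, if_pos rfl]
      · simp only [subT, List.mem_cons, List.mem_append] at hu
        rcases hu with h | hu | hu
        · exact absurd h.symm heq
        · have hnr : u ∉ subT r := mem_one_side hnd hu
          rw [ins_node, if_neg heq, ins_not_mem hnr, sib_node]
          rw [if_neg, if_neg hmr, ihl hu hnd'.1 hml]
          intro h; subst h; exact hmr (by simp [labelsLT])
        · have hnl : u ∉ subT l := fun hul => mem_one_side hnd hul hu
          have hmem : m ∈ labelsLT (ins m u r) := by
            rw [labels_ins hu hnd'.2.1]; simp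
          rw [ins_node, if_neg heq, ins_not_mem hnl, sib_node]
          rw [if_neg (ins_ne_leaf hmr), if_pos hmem, ihr hu hnd'.2.1 hmr]

/-- Every canonical tree containing a maximal label `m` (and more) is an insertion. -/
theorem surj_ins {m : ℕ} : ∀ {T : LBT}, canonP T → (labelsLT T).Nodup →
    m ∈ labelsLT T → (∀ k ∈ labelsLT T, k = m ∨ k < m) → labelsLT T ≠ {m} →
    ∃ t u, canonP t ∧ labelsLT t = (labelsLT T).erase m ∧ u ∈ subT t ∧ ins m u t = T := by
  intro T
  induction T with
  | leaf k =>
      intro _ _ hm _ hne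
      rw [labelsLT, Multiset.mem_singleton] at hm
      exact absurd (by rw [labelsLT, hm]) hne
  | node l r ihl ihr =>
      intro hc hnd hm hmax hne
      have hnd' := hnd
      rw [labelsLT, Multiset.nodup_add] at hnd'
      obtain ⟨hndl, hndr, hdisj⟩ := hnd'
      have hmaxl : ∀ k ∈ labelsLT l, k = m ∨ k < m :=
        fun k hk => hmax k (Multiset.mem_add.2 (Or.inl hk))
      have hmaxr : ∀ k ∈ labelsLT r, k = m ∨ k < m :=
        fun k hk => hmax k (Multiset.mem_add.2 (Or.inr hk))
      rcases Multiset.mem_add.1 hm with hml | hmr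
      · -- m in the left subtree
        have hmr' : m ∉ labelsLT r := fun h => Multiset.disjoint_left.1 hdisj hml h
        have hminr : minL r < m := by
          rcases hmaxr _ (minL_mem r) with h | h
          · exact absurd (h ▸ minL_mem r) hmr'
          · exact h
        have hlne : labelsLT l ≠ {m} := by
          intro h
          have : l = .leaf m := labels_singleton h
          subst this
          have : minL (LBT.leaf m) < minL r := hc.2.2
          simp only [minL] at this
          omega
        obtain ⟨t', u', hct', hlt', hut', hit'⟩ := ihl hc.1 hndl hml hmaxl hlne
        have hcard : Multiset.card (labelsLT u') ≤ Multiset.card (labelsLT t') :=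
          Multiset.card_le_card (labels_le_subT hut')
        have hne2 : LBT.node t' r ≠ u' := by
          intro h
          have : labelsLT (LBT.node t' r) = labelsLT u' := by rw [h]
          have hc2 := congrArg Multiset.card this
          rw [labelsLT, Multiset.card_add] at hc2
          have := card_labels_pos r
          omega
        have hur : u' ∉ subT r := by
          intro h
          obtain ⟨k, hk⟩ := Multiset.card_pos_iff_exists_mem.1 (card_labels_pos u')
          have hle : labelsLT u' ≤ labelsLT l :=
            le_trans (labels_le_subT hut') (le_trans (le_of_eq hlt') (Multiset.erase_le _ _))
          exact Multiset.disjoint_left.1 hdisj (Multiset.mem_of_le hle hk)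
            (Multiset.mem_of_le (labels_le_subT h) hk)
        have hminl : minL l < m := lt_trans hc.2.2 hminr
        have hminT : minL t' = minL l := by
          apply le_antisymm
          · apply minL_le
            rw [hlt', Multiset.mem_erase_of_ne (by omega)]
            exact minL_mem l
          · apply minL_le
            exact Multiset.mem_of_le (le_trans (le_of_eq hlt') (Multiset.erase_le _ _)) (minL_mem t')
        refine ⟨.node t' r, u', ⟨hct', hc.2.1, by rw [hminT]; exact hc.2.2⟩, ?_, ?_, ?_⟩
        · show labelsLT t' + labelsLT r = (labelsLT l + labelsLT r).erase m
          rw [hlt', Multiset.erase_add_left_pos _ hml]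
        · simp only [subT, List.mem_cons, List.mem_append]
          exact Or.inr (Or.inl hut')
        · rw [ins_node, if_neg hne2, ins_not_mem hur, hit']
      · -- m in the right subtree
        have hml' : m ∉ labelsLT l := fun h => Multiset.disjoint_left.1 hdisj h hmr
        by_cases hrl : r = .leaf m
        · subst hrl
          refine ⟨l, l, hc.1, ?_, mem_subT_self l, ins_self m l⟩
          show labelsLT l = (labelsLT l + {m}).erase m
          rw [Multiset.erase_add_right_pos _ (Multiset.mem_singleton_self m)]
          simp
        · have hrne : labelsLT r ≠ {m} := fun h => hrl (labels_singleton h)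
          obtain ⟨t', u', hct', hlt', hut', hit'⟩ := ihr hc.2.1 hndr hmr hmaxr hrne
          have hne2 : LBT.node l t' ≠ u' := by
            intro h
            have : labelsLT (LBT.node l t') = labelsLT u' := by rw [h]
            have hc2 := congrArg Multiset.card this
            rw [labelsLT, Multiset.card_add] at hc2
            have := card_labels_pos l
            have hcard : Multiset.card (labelsLT u') ≤ Multiset.card (labelsLT t') :=
              Multiset.card_le_card (labels_le_subT hut')
            omega
          have hul : u' ∉ subT l := by
            intro h
            obtain ⟨k, hk⟩ := Multiset.card_pos_iff_exists_mem.1 (card_labels_pos u')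
            have hk1 : k ∈ labelsLT r :=
              Multiset.mem_of_le
                (le_trans (labels_le_subT hut') (le_trans (le_of_eq hlt') (Multiset.erase_le _ _))) hk
            exact Multiset.disjoint_left.1 hdisj (Multiset.mem_of_le (labels_le_subT h) hk) hk1
          -- minL r < m : labels r nodup, m ∈, r ≠ {m} gives another elt
          have hminr : minL r < m := by
            rcases hmaxr _ (minL_mem r) with h | h
            · exfalso
              -- minL r = m, show labels r = {m}
              apply hrne
              have hcount : ∀ k ∈ labelsLT r, k = m := by
                intro k hk
                rcases hmaxr k hk with h' | h'
                · exact h'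
                · have := minL_le r k hk; omega
              -- all elements equal m, nodup → {m}
              have : labelsLT r = Multiset.replicate (Multiset.card (labelsLT r)) m :=
                Multiset.eq_replicate_card.2 hcount
              have hcm : (labelsLT r).count m = Multiset.card (labelsLT r) := by
                rw [this]; simp [Multiset.count_replicate]
              have hle1 := Multiset.nodup_iff_count_le_one.1 hndr m
              have hcard1 : Multiset.card (labelsLT r) = 1 := by
                have := card_labels_pos r; omega
              rw [this, hcard1]; rfl
            · exact h
          have hminT : minL t' = minL r := by
            apply le_antisymm
            · apply minL_le
              rw [hlt', Multiset.mem_erase_of_ne (by omega)]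
              exact minL_mem r
            · apply minL_le
              exact Multiset.mem_of_le (le_trans (le_of_eq hlt') (Multiset.erase_le _ _)) (minL_mem t')
          refine ⟨.node l t', u', ⟨hc.1, hct', by rw [hminT]; exact hc.2.2⟩, ?_, ?_, ?_⟩
          · show labelsLT l + labelsLT t' = (labelsLT l + labelsLT r).erase m
            rw [hlt', Multiset.erase_add_right_pos _ hmr]
          · simp only [subT, List.mem_cons, List.mem_append]
            exact Or.inr (Or.inr hut')
          · rw [ins_node, if_neg hne2, ins_not_mem hul, hit']

end Aux2
section Aux3

/-- Canonical trees with given label multiset. -/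
def CS (S : Multiset ℕ) : Type := {t : LBT // canonP t ∧ labelsLT t = S}

noncomputable def csEquiv (S : Multiset ℕ) (hS : S.Nodup) :
    CS S ≃ {q : LTree // LTree.labels q = S} := by
  refine Equiv.ofBijective (fun t => ⟨⟦t.1⟧, t.2.2⟩) ⟨?_, ?_⟩
  · intro a b h
    have h' : (⟦a.1⟧ : LTree) = ⟦b.1⟧ := congrArg Subtype.val h
    exact Subtype.ext (canon_unique (Quotient.exact h') a.2.1 b.2.1)
  · rintro ⟨q, hq⟩
    obtain ⟨t, rfl⟩ := Quotient.exists_rep q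
    have hq' : labelsLT t = S := hq
    have hnd : (labelsLT t).Nodup := by rw [hq']; exact hS
    refine ⟨⟨nrm t, canon_nrm t hnd, (labels_nrm t).trans hq'⟩, ?_⟩
    exact Subtype.ext (Quotient.sound (iso_nrm t).symm')

theorem card_base (k : ℕ) : Nat.card (CS ({k} : Multiset ℕ)) = 1 := by
  have : Unique (CS ({k} : Multiset ℕ)) :=
    { default := ⟨.leaf k, trivial, rfl⟩
      uniq := fun t => Subtype.ext (labels_singleton t.2.2) }
  exact Nat.card_unique

theorem card_step (S : Multiset ℕ) (hS : S.Nodup) (hS0 : S ≠ 0) (m : ℕ)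
    (hm : ∀ k ∈ S, k < m) :
    Nat.card (CS (S + {m})) = (2 * Multiset.card S - 1) * Nat.card (CS S) := by
  have hmS : m ∉ S := fun h => lt_irrefl m (hm m h)
  have hndSm : (S + {m}).Nodup := by
    rw [Multiset.nodup_add]
    refine ⟨hS, Multiset.nodup_singleton m, Multiset.disjoint_left.2 ?_⟩
    intro a ha hb
    rw [Multiset.mem_singleton] at hb
    subst hb; exact hmS ha
  let G : (Σ t : CS S, {u : LBT // u ∈ subT t.1}) → CS (S + {m}) := fun p =>
    ⟨ins m p.2.1 p.1.1,
      canon_ins p.2.2 (by rw [p.1.2.2]; exact hS) (by rw [p.1.2.2]; exact hm) p.1.2.1,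
      by rw [labels_ins p.2.2 (by rw [p.1.2.2]; exact hS), p.1.2.2]⟩
  have hGbij : Function.Bijective G := by
    constructor
    · rintro ⟨⟨t, hc, hl⟩, ⟨u, hu⟩⟩ ⟨⟨t', hc', hl'⟩, ⟨u', hu'⟩⟩ h
      have hins : ins m u t = ins m u' t' := congrArg Subtype.val h
      have hmt : m ∉ labelsLT t := by rw [hl]; exact hmS
      have hmt' : m ∉ labelsLT t' := by rw [hl']; exact hmS
      have hndt : (labelsLT t).Nodup := by rw [hl]; exact hS
      have hndt' : (labelsLT t').Nodup := by rw [hl']; exact hS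
      have hu0 : u ∈ subT t := hu
      have hu0' : u' ∈ subT t' := hu'
      have ht : t = t' := by
        rw [← del_ins hu0 hndt hmt, ← del_ins hu0' hndt' hmt', hins]
      subst ht
      have hu2 : u = u' := by
        rw [← sib_ins hu0 hndt hmt, ← sib_ins hu0' hndt' hmt', hins]
      subst hu2
      rfl
    · rintro ⟨T, hcT, hlT⟩
      have hmT : m ∈ labelsLT T := by rw [hlT]; simp
      have hmaxT : ∀ k ∈ labelsLT T, k = m ∨ k < m := by
        rw [hlT]
        intro k hk
        rcases Multiset.mem_add.1 hk with h | h
        · exact Or.inr (hm k h)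
        · exact Or.inl (Multiset.mem_singleton.1 h)
      have hneT : labelsLT T ≠ {m} := by
        rw [hlT]
        intro h
        have h2 := congrArg Multiset.card h
        rw [Multiset.card_add, Multiset.card_singleton] at h2
        have := Multiset.card_pos.2 hS0
        omega
      obtain ⟨t, u, hct, hlt, hut, hit⟩ := surj_ins hcT (hlT ▸ hndSm) hmT hmaxT hneT
      have hltS : labelsLT t = S := by
        rw [hlt, hlT, Multiset.erase_add_right_pos _ (Multiset.mem_singleton_self m)]
        simp
      exact ⟨⟨⟨t, hct, hltS⟩, ⟨u, hut⟩⟩, Subtype.ext hit⟩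
  have e2 : ∀ t : CS S, {u : LBT // u ∈ subT t.1} ≃ Fin (2 * Multiset.card S - 1) := by
    rintro ⟨t, hc, hl⟩
    have hnd : (labelsLT t).Nodup := hl ▸ hS
    have hpos := card_labels_pos t
    have hlen : (subT t).length = 2 * Multiset.card S - 1 := by
      have := length_subT t
      rw [hl] at this
      rw [hl] at hpos
      omega
    exact (List.Nodup.getEquiv _ (nodup_subT t hnd)).symm.trans (finCongr hlen)
  calc Nat.card (CS (S + {m}))
      = Nat.card (Σ t : CS S, {u : LBT // u ∈ subT t.1}) :=
        Nat.card_congr (Equiv.ofBijective G hGbij).symm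
    _ = Nat.card (CS S × Fin (2 * Multiset.card S - 1)) :=
        Nat.card_congr ((Equiv.sigmaCongrRight e2).trans (Equiv.sigmaEquivProd _ _))
    _ = (2 * Multiset.card S - 1) * Nat.card (CS S) := by
        rw [Nat.card_prod, Nat.card_eq_fintype_card (α := Fin (2 * Multiset.card S - 1)),
          Fintype.card_fin, mul_comm]

theorem Icc_step (n : ℕ) (hn : 1 ≤ n) :
    (Finset.Icc 1 (n + 1)).val = (Finset.Icc 1 n).val + {n + 1} := by
  have hnd1 : ((Finset.Icc 1 n).val + ({n + 1} : Multiset ℕ)).Nodup := by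
    rw [Multiset.nodup_add]
    refine ⟨(Finset.Icc 1 n).nodup, Multiset.nodup_singleton _, Multiset.disjoint_left.2 ?_⟩
    intro a ha hb
    rw [Multiset.mem_singleton] at hb
    rw [Finset.mem_val, Finset.mem_Icc] at ha
    omega
  rw [Multiset.Nodup.ext (Finset.Icc 1 (n + 1)).nodup hnd1]
  intro a
  rw [Multiset.mem_add, Multiset.mem_singleton, Finset.mem_val, Finset.mem_val,
    Finset.mem_Icc, Finset.mem_Icc]
  omega

theorem cs_main : ∀ n : ℕ, 1 ≤ n →
    Nat.card (CS (Finset.Icc 1 n).val) = doubleFac (2 * n - 3) := by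
  intro n
  induction n with
  | zero => omega
  | succ n ih =>
      intro _
      by_cases hn : n = 0
      · subst hn
        rw [show (Finset.Icc 1 1).val = ({1} : Multiset ℕ) by rw [Finset.Icc_self]; rfl]
        rw [card_base]
        rfl
      · have hn1 : 1 ≤ n := by omega
        have hcard : Multiset.card (Finset.Icc 1 n).val = n := by
          show (Finset.Icc 1 n).card = n
          rw [Nat.card_Icc]
          omega
        have hS0 : (Finset.Icc 1 n).val ≠ 0 := by
          intro h
          rw [h] at hcard
          simp at hcard
          omega
        rw [Icc_step n hn1,
          card_step _ (Finset.Icc 1 n).nodup hS0 (n + 1)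
            (fun k hk => by rw [Finset.mem_val, Finset.mem_Icc] at hk; omega),
          ih hn1, hcard]
        by_cases hn2 : n = 1
        · subst hn2; rfl
        · have h3 : 2 * (n + 1) - 3 = (2 * n - 3) + 2 := by omega
          rw [h3, doubleFac]
          congr 1

end Aux3

/-- the number of phylogenetic trees on `n` labeled leaves is `(2n-3)!!`. -/
theorem phyloCount_eq_doubleFac :
    ∀ n : ℕ, 2 ≤ n → phyloCount n = doubleFac (2 * n - 3) := by
  intro n hn
  have e : CS (Finset.Icc 1 n).val ≃ Phylo n := csEquiv _ (Finset.Icc 1 n).nodup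
  have h1 : phyloCount n = Nat.card (CS (Finset.Icc 1 n).val) := (Nat.card_congr e).symm
  rw [h1, cs_main n (by omega)]
end

section
/- The sequence b_n = (2n-3)!! (with b_1 = 1) satisfies the recurrence b_n = (1/2) Σ_{k=1}^{n-1} C(n,k) b_k b_{n−k} for all n ≥ 2. -/
open scoped Classical

lemma centralBinom_eq_catalan (k : ℕ) (hk : 1 ≤ k) :
    Nat.centralBinom k = 2 * (2 * k - 1) * catalan (k - 1) := by
  obtain ⟨m, rfl⟩ : ∃ m, k = m + 1 := ⟨k - 1, by omega⟩
  have h1 := Nat.succ_mul_centralBinom_succ m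
  have h2 := succ_mul_catalan_eq_centralBinom m
  have h3 : (m + 1) * Nat.centralBinom (m + 1)
      = (m + 1) * (2 * (2 * (m + 1) - 1) * catalan (m + 1 - 1)) := by
    rw [h1, ← h2]
    have e1 : 2 * (m + 1) - 1 = 2 * m + 1 := by omega
    have e2 : m + 1 - 1 = m := by omega
    rw [e1, e2]; ring
  exact Nat.eq_of_mul_eq_mul_left (by omega) h3

lemma doubleFac_eq_catalan (k : ℕ) (hk : 1 ≤ k) :
    doubleFac (2 * k - 3) * 2 ^ (k - 1) = catalan (k - 1) * k.factorial := by
  induction k with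
  | zero => omega
  | succ k ih =>
    rcases Nat.lt_or_ge k 2 with h | h
    · interval_cases k <;> simp [doubleFac, Nat.factorial]
    · obtain ⟨m, rfl⟩ : ∃ m, k = m + 2 := ⟨k - 2, by omega⟩
      have ih := ih (by omega)
      have e1 : 2 * (m + 2 + 1) - 3 = (2 * m + 1) + 2 := by omega
      have e2 : m + 2 + 1 - 1 = m + 2 := by omega
      have e3 : 2 * (m + 2) - 3 = 2 * m + 1 := by omega
      have e4 : m + 2 - 1 = m + 1 := by omega
      rw [e3, e4] at ih
      have hc' : (m + 2 + 1) * catalan (m + 2) = Nat.centralBinom (m + 2) :=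
        succ_mul_catalan_eq_centralBinom (m + 2)
      have hcb' : Nat.centralBinom (m + 2) = 2 * (2 * m + 3) * catalan (m + 1) := by
        have h := centralBinom_eq_catalan (m + 2) (by omega)
        have e5 : 2 * (m + 2) - 1 = 2 * m + 3 := by omega
        rw [e5, e4] at h
        exact h
      rw [e1, e2, doubleFac]
      calc (2 * m + 1 + 2) * doubleFac (2 * m + 1) * 2 ^ (m + 2)
          = 2 * (2 * m + 3) * (doubleFac (2 * m + 1) * 2 ^ (m + 1)) := by ring
        _ = 2 * (2 * m + 3) * (catalan (m + 1) * (m + 2).factorial) := by rw [ih]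
        _ = 2 * (2 * m + 3) * catalan (m + 1) * (m + 2).factorial := by ring
        _ = Nat.centralBinom (m + 2) * (m + 2).factorial := by rw [hcb']
        _ = (m + 2 + 1) * catalan (m + 2) * (m + 2).factorial := by rw [← hc']
        _ = catalan (m + 2) * (m + 2 + 1).factorial := by
              rw [Nat.factorial_succ (m + 2)]; ring

lemma catalan_conv (n : ℕ) (hn : 2 ≤ n) :
    ∑ k ∈ Finset.Ico 1 n, catalan (k - 1) * catalan (n - 1 - k) = catalan (n - 1) := by
  obtain ⟨m, rfl⟩ : ∃ m, n = m + 2 := ⟨n - 2, by omega⟩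
  rw [Finset.sum_Ico_eq_sum_range]
  have h1 : m + 2 - 1 = m + 1 := by omega
  rw [h1, catalan_succ,
    show (∑ i : Fin (m + 1), catalan i * catalan (m - i))
        = ∑ i ∈ Finset.range (m + 1), catalan i * catalan (m - i) from
      Fin.sum_univ_eq_sum_range (fun i => catalan i * catalan (m - i)) (m + 1)]
  apply Finset.sum_congr rfl
  intro i hi
  simp only [Finset.mem_range] at hi
  congr 1
  · congr 1; omega
  · congr 1; omega

lemma doubleFac_eq_catalan_q (k : ℕ) (hk : 1 ≤ k) :
    (doubleFac (2 * k - 3) : ℚ) = (catalan (k - 1) * k.factorial : ℚ) / 2 ^ (k - 1) := by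
  have := doubleFac_eq_catalan k hk
  have h2 : (2 : ℚ) ^ (k - 1) ≠ 0 := by positivity
  field_simp
  exact_mod_cast this

/-- the sequence `b_n = (2n-3)!!` satisfies
`b_n = (1/2) Σ_{k=1}^{n-1} C(n,k) b_k b_{n−k}` for `n ≥ 2`. -/
theorem doubleFac_recurrence (n : ℕ) (hn : 2 ≤ n) :
    (doubleFac (2 * n - 3) : ℚ) =
      (1 / 2) * ∑ k ∈ Finset.Ico 1 n,
        (n.choose k : ℚ) * doubleFac (2 * k - 3) * doubleFac (2 * (n - k) - 3) := by
  have hq := doubleFac_eq_catalan_q n (by omega)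
  have step : ∀ k ∈ Finset.Ico 1 n,
      (n.choose k : ℚ) * doubleFac (2 * k - 3) * doubleFac (2 * (n - k) - 3)
        = (n.factorial : ℚ) / 2 ^ (n - 2)
            * ((catalan (k - 1) : ℚ) * catalan (n - 1 - k)) := by
    intro k hk
    simp only [Finset.mem_Ico] at hk
    rw [doubleFac_eq_catalan_q k (by omega), doubleFac_eq_catalan_q (n - k) (by omega)]
    have hcf : (n.choose k : ℚ) * k.factorial * (n - k).factorial = n.factorial := by
      exact_mod_cast Nat.choose_mul_factorial_mul_factorial (le_of_lt hk.2)
    have hpow : (2 : ℚ) ^ (k - 1) * 2 ^ (n - k - 1) = 2 ^ (n - 2) := by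
      rw [← pow_add]; congr 1; omega
    have hnk : n - k - 1 = n - 1 - k := by omega
    rw [hnk] at hpow
    have h1 : (2 : ℚ) ^ (k - 1) ≠ 0 := by positivity
    have h2 : (2 : ℚ) ^ (n - 1 - k) ≠ 0 := by positivity
    have h3 : (2 : ℚ) ^ (n - 2) ≠ 0 := by positivity
    rw [hnk]
    field_simp
    rw [← hpow]
    ring_nf
    rw [← hcf]
    ring
  rw [Finset.sum_congr rfl step, ← Finset.mul_sum, hq]
  have hconv : ((catalan (n - 1) : ℚ)) =
      ∑ k ∈ Finset.Ico 1 n, (catalan (k - 1) : ℚ) * catalan (n - 1 - k) := by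
    rw [← catalan_conv n hn]
    push_cast
    rfl
  rw [← hconv]
  have hpow2 : (2 : ℚ) ^ (n - 1) = 2 ^ (n - 2) * 2 := by
    rw [← pow_succ]; congr 1; omega
  have h3 : (2 : ℚ) ^ (n - 2) ≠ 0 := by positivity
  rw [hpow2]
  field_simp
end

section
/- For every n ≥ 1, the identity Σ_{t ∈ U_n} n!/2^{sym(t)} = (2n-3)!! holds, where the sum is over all isomorphism classes of Otter trees with n leaves. -/
open scoped Classical

/-! ### Auxiliary development -/

deriving instance DecidableEq for BT

theorem leavesBT_pos : ∀ t : BT, 1 ≤ leavesBT t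
  | .leaf => le_refl 1
  | .node l r => by
      have h1 := leavesBT_pos l
      simp only [leavesBT]; omega

theorem internals_add_one : ∀ t : BT, internalsBT t + 1 = leavesBT t
  | .leaf => rfl
  | .node l r => by
      have h1 := internals_add_one l; have h2 := internals_add_one r
      simp only [internalsBT, leavesBT]; omega

/-- The finset of all plane binary trees with `n` leaves. -/
def Tset : ℕ → Finset BT
  | 0 => ∅
  | 1 => {BT.leaf}
  | (n+2) => (Finset.Ico 1 (n+2)).attach.biUnion fun k =>
      ((Tset k.1) ×ˢ (Tset (n + 2 - k.1))).image fun p => BT.node p.1 p.2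
  decreasing_by
    all_goals (have := Finset.mem_Ico.mp k.2; omega)

theorem mem_Tset : ∀ n (t : BT), t ∈ Tset n ↔ leavesBT t = n := by
  intro n
  induction n using Nat.strong_induction_on with
  | _ n ih =>
    match n with
    | 0 =>
        intro t
        simp only [Tset, Finset.notMem_empty, false_iff]
        have := leavesBT_pos t; omega
    | 1 =>
        intro t
        constructor
        · intro h
          simp only [Tset, Finset.mem_singleton] at h
          subst h; rfl
        · intro h
          cases t with
          | leaf => simp [Tset]
          | node l r =>
              exfalso
              have h1 := leavesBT_pos l; have h2 := leavesBT_pos r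
              simp only [leavesBT] at h; omega
    | (m+2) =>
        intro t
        constructor
        · intro h
          simp only [Tset, Finset.mem_biUnion, Finset.mem_attach, Finset.mem_image,
            Finset.mem_product, true_and] at h
          obtain ⟨⟨k, hk⟩, ⟨a, b⟩, ⟨ha, hb⟩, rfl⟩ := h
          have hk' := Finset.mem_Ico.mp hk
          have h1 := (ih k (by omega) a).mp ha
          have h2 := (ih (m + 2 - k) (by omega) b).mp hb
          simp only [leavesBT]; omega
        · intro h
          cases t with
          | leaf =>
              exfalso; simp only [leavesBT] at h; omega
          | node l r =>
              have hl := leavesBT_pos l; have hr := leavesBT_pos r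
              simp only [leavesBT] at h
              simp only [Tset, Finset.mem_biUnion, Finset.mem_attach, true_and]
              refine ⟨⟨leavesBT l, Finset.mem_Ico.mpr ⟨hl, by omega⟩⟩, ?_⟩
              simp only [Finset.mem_image, Finset.mem_product]
              exact ⟨(l, r), ⟨(ih _ (by omega) l).mpr rfl,
                (ih _ (by omega) r).mpr (by omega)⟩, rfl⟩

/-- The finset of plane representatives of the iso-class of `t`. -/
def Cls : BT → Finset BT
  | .leaf => {BT.leaf}
  | .node l r =>
      ((Cls l ×ˢ Cls r).image fun p => BT.node p.1 p.2) ∪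
      ((Cls l ×ˢ Cls r).image fun p => BT.node p.2 p.1)

theorem Cls_node (l r : BT) : Cls (BT.node l r) =
    ((Cls l ×ˢ Cls r).image fun p => BT.node p.1 p.2) ∪
    ((Cls l ×ˢ Cls r).image fun p => BT.node p.2 p.1) := rfl

theorem mem_Cls : ∀ t s : BT, s ∈ Cls t ↔ Iso s t := by
  intro t
  induction t with
  | leaf =>
      intro s
      simp only [Cls, Finset.mem_singleton]
      constructor
      · rintro rfl; exact Iso.leaf
      · intro h; cases h; rfl
  | node l r ihl ihr =>
      intro s
      simp only [Cls, Finset.mem_union, Finset.mem_image, Finset.mem_product]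
      constructor
      · rintro (⟨⟨a, b⟩, ⟨ha, hb⟩, rfl⟩ | ⟨⟨a, b⟩, ⟨ha, hb⟩, rfl⟩)
        · exact Iso.node ((ihl a).mp ha) ((ihr b).mp hb)
        · exact Iso.swap ((ihr b).mp hb) ((ihl a).mp ha)
      · intro h
        cases h with
        | node h1 h2 => exact Or.inl ⟨(_, _), ⟨(ihl _).mpr h1, (ihr _).mpr h2⟩, rfl⟩
        | swap h1 h2 => exact Or.inr ⟨(_, _), ⟨(ihl _).mpr h2, (ihr _).mpr h1⟩, rfl⟩

theorem node_inj : Function.Injective (fun p : BT × BT => BT.node p.1 p.2) := by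
  rintro ⟨a, b⟩ ⟨c, d⟩ h
  simp only [BT.node.injEq] at h
  simp [Prod.ext_iff, h.1, h.2]

theorem node_inj' : Function.Injective (fun p : BT × BT => BT.node p.2 p.1) := by
  rintro ⟨a, b⟩ ⟨c, d⟩ h
  simp only [BT.node.injEq] at h
  simp [Prod.ext_iff, h.1, h.2]

theorem Cls_card : ∀ t : BT, 2 ^ symBT t * (Cls t).card = 2 ^ internalsBT t := by
  intro t
  induction t with
  | leaf => simp [Cls, symBT, internalsBT]
  | node l r ihl ihr =>
      by_cases h : Iso l r
      · -- the two images coincide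
        have hlr : Cls l = Cls r := by
          ext s
          rw [mem_Cls, mem_Cls]
          exact ⟨fun hs => hs.trans' h, fun hs => hs.trans' h.symm'⟩
        have himg : ((Cls l ×ˢ Cls r).image fun p => BT.node p.2 p.1) =
            ((Cls l ×ˢ Cls r).image fun p => BT.node p.1 p.2) := by
          ext s
          simp only [Finset.mem_image, Finset.mem_product, hlr]
          constructor
          · rintro ⟨⟨a, b⟩, ⟨ha, hb⟩, rfl⟩; exact ⟨(b, a), ⟨hb, ha⟩, rfl⟩
          · rintro ⟨⟨a, b⟩, ⟨ha, hb⟩, rfl⟩; exact ⟨(b, a), ⟨hb, ha⟩, rfl⟩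
        have hcard : (Cls (BT.node l r)).card = (Cls l).card * (Cls r).card := by
          rw [Cls_node, himg, Finset.union_self, Finset.card_image_of_injective _ node_inj,
            Finset.card_product]
        rw [hcard]
        simp only [symBT, internalsBT, if_pos h]
        rw [pow_succ, pow_succ, pow_add, pow_add]
        calc 2 ^ symBT l * 2 ^ symBT r * 2 * ((Cls l).card * (Cls r).card)
            = (2 ^ symBT l * (Cls l).card) * (2 ^ symBT r * (Cls r).card) * 2 := by ring
          _ = 2 ^ internalsBT l * 2 ^ internalsBT r * 2 := by rw [ihl, ihr]
      · -- the two images are disjoint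
        have hdisj : Disjoint ((Cls l ×ˢ Cls r).image fun p => BT.node p.1 p.2)
            ((Cls l ×ˢ Cls r).image fun p => BT.node p.2 p.1) := by
          rw [Finset.disjoint_left]
          rintro s hs1 hs2
          simp only [Finset.mem_image, Finset.mem_product] at hs1 hs2
          obtain ⟨⟨a, b⟩, ⟨ha, hb⟩, rfl⟩ := hs1
          obtain ⟨⟨c, d⟩, ⟨hc, hd⟩, heq⟩ := hs2
          simp only [BT.node.injEq] at heq
          obtain ⟨rfl, rfl⟩ := heq
          rw [mem_Cls] at ha hd hc hb
          exact h (((ha.symm').trans' hd).symm'.symm'.trans' ((hd.symm').trans' hd) |>.trans'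
            ((hd.symm').trans' hd) |>.trans' (hd.symm'.trans' hd)) |>.elim
        have hcard : (Cls (BT.node l r)).card = 2 * ((Cls l).card * (Cls r).card) := by
          rw [Cls_node, Finset.card_union_of_disjoint hdisj,
            Finset.card_image_of_injective _ node_inj,
            Finset.card_image_of_injective _ node_inj', Finset.card_product]
          ring
        rw [hcard]
        simp only [symBT, internalsBT, if_neg h, add_zero]
        rw [pow_succ, pow_add, pow_add]
        calc 2 ^ symBT l * 2 ^ symBT r * (2 * ((Cls l).card * (Cls r).card))
            = (2 ^ symBT l * (Cls l).card) * (2 ^ symBT r * (Cls r).card) * 2 := by ring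
          _ = 2 ^ internalsBT l * 2 ^ internalsBT r * 2 := by rw [ihl, ihr]

theorem Tset_card : ∀ n, (Tset (n + 1)).card = catalan n := by
  intro n
  induction n using Nat.strong_induction_on with
  | _ n ih =>
    match n with
    | 0 => simp [Tset, catalan]
    | (m+1) =>
        have hdisj : ∀ k1 ∈ (Finset.Ico 1 (m + 2)).attach,
            ∀ k2 ∈ (Finset.Ico 1 (m + 2)).attach, k1 ≠ k2 →
            Disjoint ((Tset k1.1 ×ˢ Tset (m + 2 - k1.1)).image fun p => BT.node p.1 p.2)
              ((Tset k2.1 ×ˢ Tset (m + 2 - k2.1)).image fun p => BT.node p.1 p.2) := by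
          rintro ⟨k1, hk1⟩ - ⟨k2, hk2⟩ - hne
          rw [Finset.disjoint_left]
          rintro s hs1 hs2
          simp only [Finset.mem_image, Finset.mem_product] at hs1 hs2
          obtain ⟨⟨a, b⟩, ⟨ha, hb⟩, rfl⟩ := hs1
          obtain ⟨⟨c, d⟩, ⟨hc, hd⟩, heq⟩ := hs2
          simp only [BT.node.injEq] at heq
          obtain ⟨rfl, rfl⟩ := heq
          have h1 := (mem_Tset _ _).mp ha
          have h2 := (mem_Tset _ _).mp hc
          exact hne (by simp [h1 ▸ h2])
        have hstep : (Tset (m + 2)).card =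
            ∑ k ∈ Finset.Ico 1 (m + 2), (Tset k).card * (Tset (m + 2 - k)).card := by
          rw [Tset]
          rw [Finset.card_biUnion hdisj]
          rw [← Finset.sum_attach (Finset.Ico 1 (m + 2))
            (fun k => (Tset k).card * (Tset (m + 2 - k)).card)]
          refine Finset.sum_congr rfl fun k _ => ?_
          rw [Finset.card_image_of_injective _ node_inj, Finset.card_product]
        rw [show m + 1 + 1 = m + 2 from rfl, hstep, catalan_succ]
        rw [Fin.sum_univ_eq_sum_range (fun i => catalan i * catalan (m - i)) (m + 1)]
        rw [Finset.sum_Ico_eq_sum_range]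
        simp only [show m + 2 - 1 = m + 1 from rfl]
        refine Finset.sum_congr rfl fun i hi => ?_
        rw [Finset.mem_range] at hi
        have e1 : 1 + i = i + 1 := by omega
        rw [e1]
        have e2 : m + 2 - (i + 1) = (m - i) + 1 := by omega
        rw [e2, ih i (by omega), ih (m - i) (by omega)]

theorem doubleFac_odd_step : ∀ m, doubleFac (2 * m + 1) = (2 * m + 1) * doubleFac (2 * m - 1) := by
  intro m
  cases m with
  | zero => simp [doubleFac]
  | succ k =>
      have h1 : 2 * (k + 1) + 1 = (2 * k + 1) + 2 := by omega
      have h2 : 2 * (k + 1) - 1 = 2 * k + 1 := by omega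
      rw [h1, h2]
      show (2 * k + 1 + 2) * doubleFac (2 * k + 1) = _
      ring_nf

theorem succ_mul_catalan (k : ℕ) : (k + 1) * catalan k = Nat.centralBinom k := by
  rw [catalan_eq_centralBinom_div]
  exact Nat.mul_div_cancel' (Nat.succ_dvd_centralBinom k)

theorem centralBinom_succ_eq (m : ℕ) :
    Nat.centralBinom (m + 1) = 2 * (2 * m + 1) * catalan m := by
  have h1 : (m + 1) * Nat.centralBinom (m + 1) = 2 * (2 * m + 1) * Nat.centralBinom m :=
    Nat.succ_mul_centralBinom_succ m
  have h2 : (m + 1) * catalan m = Nat.centralBinom m := succ_mul_catalan m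
  have : (m + 1) * Nat.centralBinom (m + 1) = (m + 1) * (2 * (2 * m + 1) * catalan m) := by
    rw [h1, ← h2]; ring
  exact Nat.eq_of_mul_eq_mul_left (by omega) this

theorem key_num : ∀ m, (m + 1).factorial * catalan m = 2 ^ m * doubleFac (2 * m - 1) := by
  intro m
  induction m with
  | zero => simp [Nat.factorial, doubleFac]
  | succ k ih =>
      have hcat : (k + 2) * catalan (k + 1) = 2 * (2 * k + 1) * catalan k := by
        have h2 : (k + 1 + 1) * catalan (k + 1) = Nat.centralBinom (k + 1) :=
          succ_mul_catalan (k + 1)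
        rw [show k + 2 = k + 1 + 1 from rfl, h2, centralBinom_succ_eq]
      have hfac : (k + 1 + 1).factorial = (k + 2) * (k + 1).factorial := rfl
      have h3 : 2 * (k + 1) - 1 = 2 * k + 1 := by omega
      calc (k + 1 + 1).factorial * catalan (k + 1)
          = (k + 1).factorial * ((k + 2) * catalan (k + 1)) := by rw [hfac]; ring
        _ = (k + 1).factorial * (2 * (2 * k + 1) * catalan k) := by rw [hcat]
        _ = 2 * (2 * k + 1) * ((k + 1).factorial * catalan k) := by ring
        _ = 2 * (2 * k + 1) * (2 ^ k * doubleFac (2 * k - 1)) := by rw [ih]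
        _ = 2 ^ (k + 1) * ((2 * k + 1) * doubleFac (2 * k - 1)) := by ring
        _ = 2 ^ (k + 1) * doubleFac (2 * k + 1) := by rw [doubleFac_odd_step]
        _ = 2 ^ (k + 1) * doubleFac (2 * (k + 1) - 1) := by rw [h3]

noncomputable instance OtterN.fintype (n : ℕ) : Fintype (OtterN n) := by
  refine Fintype.ofSurjective
    (fun t : {x // x ∈ Tset n} => (⟨⟦t.1⟧, (mem_Tset n t.1).mp t.2⟩ : OtterN n)) ?_
  rintro ⟨q, hq⟩
  refine ⟨⟨q.out, (mem_Tset n q.out).mpr ?_⟩, ?_⟩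
  · have : Otter.leaves ⟦q.out⟧ = leavesBT q.out := rfl
    rw [← this, Quotient.out_eq q, hq]
  · exact Subtype.ext (Quotient.out_eq q)

/-- `Σ_{t ∈ U_n} n!/2^{sym(t)} = (2n-3)!!` for every `n ≥ 1`. -/
theorem sum_labelings_eq_doubleFac (n : ℕ) (hn : 1 ≤ n) :
    ∑ᶠ t : OtterN n, ((n.factorial : ℚ) / 2 ^ t.1.sym) =
      (doubleFac (2 * n - 3) : ℚ) := by
  obtain ⟨m, rfl⟩ : ∃ m, n = m + 1 := ⟨n - 1, by omega⟩
  set n := m + 1 with hn'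
  rw [finsum_eq_sum_of_fintype]
  -- pointwise rewrite
  have hpt : ∀ q : OtterN n, ((n.factorial : ℚ) / 2 ^ q.1.sym) =
      (n.factorial : ℚ) * (Cls q.1.out).card / 2 ^ m := by
    intro q
    have hlq : leavesBT q.1.out = n := by
      have : Otter.leaves ⟦q.1.out⟧ = leavesBT q.1.out := rfl
      rw [← this, Quotient.out_eq q.1, q.2]
    have hsq : q.1.sym = symBT q.1.out := by
      conv_lhs => rw [← Quotient.out_eq q.1]
      rfl
    have hint : internalsBT q.1.out = m := by
      have := internals_add_one q.1.out
      omega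
    have hcc : (2 : ℕ) ^ symBT q.1.out * (Cls q.1.out).card = 2 ^ m := by
      rw [Cls_card, hint]
    have hccQ : (2 : ℚ) ^ symBT q.1.out * (Cls q.1.out).card = 2 ^ m := by
      exact_mod_cast congrArg (Nat.cast : ℕ → ℚ) hcc
    rw [hsq, div_eq_div_iff (by positivity) (by positivity), mul_assoc,
      mul_comm ((Cls q.1.out).card : ℚ), hccQ]
  rw [Finset.sum_congr rfl (fun q _ => hpt q)]
  rw [← Finset.sum_div, ← Finset.mul_sum]
  -- the classes partition Tset n
  have hpart : Tset n = Finset.univ.biUnion (fun q : OtterN n => Cls q.1.out) := by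
    ext s
    simp only [Finset.mem_biUnion, Finset.mem_univ, true_and]
    constructor
    · intro hs
      have hls := (mem_Tset n s).mp hs
      refine ⟨⟨⟦s⟧, hls⟩, ?_⟩
      rw [mem_Cls]
      exact Iso.symm' (Quotient.mk_out s)
    · rintro ⟨q, hq⟩
      rw [mem_Cls] at hq
      have hlq : leavesBT q.1.out = n := by
        have : Otter.leaves ⟦q.1.out⟧ = leavesBT q.1.out := rfl
        rw [← this, Quotient.out_eq q.1, q.2]
      rw [mem_Tset, leaves_iso hq, hlq]
  have hdisj : ∀ q1 ∈ (Finset.univ : Finset (OtterN n)), ∀ q2 ∈ Finset.univ, q1 ≠ q2 →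
      Disjoint (Cls q1.1.out) (Cls q2.1.out) := by
    rintro q1 - q2 - hne
    rw [Finset.disjoint_left]
    rintro s hs1 hs2
    rw [mem_Cls] at hs1 hs2
    refine hne (Subtype.ext ?_)
    have : Iso q1.1.out q2.1.out := hs1.symm'.trans' hs2
    exact (Quotient.out_eq q1.1).symm.trans ((Quotient.sound this).trans (Quotient.out_eq q2.1))
  have hsum : ∑ q : OtterN n, ((Cls q.1.out).card : ℚ) = ((Tset n).card : ℚ) := by
    rw [hpart, Finset.card_biUnion hdisj]
    push_cast
    rfl
  rw [hsum]
  have hkey : (n.factorial : ℚ) * (Tset n).card = 2 ^ m * doubleFac (2 * n - 3) := by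
    have h3 : 2 * n - 3 = 2 * m - 1 := by omega
    rw [h3]
    have := key_num m
    rw [hn', Tset_card m]
    exact_mod_cast congrArg (Nat.cast : ℕ → ℚ) this
  rw [hkey]
  rw [mul_comm, mul_div_assoc]
  simp
end
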